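/- arXiv:1405.3385 — 2 statements merged into one kernel-verified Lean document; each statement's English description precedes it below -/
import Mathlib

section
/- There exists a constant C > 0 such that for every X ∈ H¹(ℝ) (identified with its continuous representative) and every ε ∈ (0, 1], the sequence x = (X(εn))_{n ∈ ℤ} belongs to l²(ℤ) and satisfies ‖x‖_{l²} ≤ C ε^{−1/2} ‖X‖_{H¹(ℝ)}. -/
open MeasureTheory Real Filter Set

private lemma cs_aux (g : ℝ → ℝ) (hg : MemLp g 2 volume) (a b : ℝ) (hab : a ≤ b) :
    (∫ t in Set.Ioc a b, |g t|) ^ 2 ≤ (b - a) * ∫ t in Set.Ioc a b, g t ^ 2 := by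
  set μ := volume.restrict (Set.Ioc a b) with hμ
  haveI : IsFiniteMeasure μ := ⟨by
    rw [hμ, Measure.restrict_apply_univ]; exact measure_Ioc_lt_top⟩
  have h2 : (ENNReal.ofReal 2) = (2 : ENNReal) := by norm_num
  have hgμ : MemLp (fun t => |g t|) (ENNReal.ofReal 2) μ := by
    rw [h2]
    simpa [abs] using (hg.restrict (Set.Ioc a b)).norm
  have h1μ : MemLp (fun _ : ℝ => (1 : ℝ)) (ENNReal.ofReal 2) μ := by
    rw [h2]; exact memLp_const 1
  have hpq : Real.HolderConjugate 2 2 := Real.holderConjugate_iff.mpr ⟨one_lt_two, by norm_num⟩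
  have H := integral_mul_le_Lp_mul_Lq_of_nonneg (μ := μ) hpq
    (Eventually.of_forall fun t => abs_nonneg (g t))
    (Eventually.of_forall fun _ => zero_le_one) hgμ h1μ
  simp only [mul_one, one_pow] at H
  have hrw1 : ∀ t : ℝ, |g t| ^ (2 : ℝ) = g t ^ 2 := fun t => by
    rw [show ((2:ℝ) = ((2:ℕ):ℝ)) by norm_num, Real.rpow_natCast, sq_abs]
  simp only [hrw1, Real.one_rpow] at H
  have hμconst : (∫ _ : ℝ, (1:ℝ) ∂μ) = b - a := by
    rw [hμ, integral_const]
    simp [Real.volume_Ioc, ENNReal.toReal_ofReal (by linarith : (0:ℝ) ≤ b - a), hab]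
  rw [hμconst] at H
  have hS : 0 ≤ ∫ t, g t ^ 2 ∂μ := integral_nonneg fun t => sq_nonneg _
  have hba : (0:ℝ) ≤ b - a := by linarith
  have hsq : ((∫ t, g t ^ 2 ∂μ) ^ ((1:ℝ)/2) * (b - a) ^ ((1:ℝ)/2)) ^ 2
      = (b - a) * ∫ t, g t ^ 2 ∂μ := by
    rw [← Real.sqrt_eq_rpow, ← Real.sqrt_eq_rpow, mul_pow, Real.sq_sqrt hS,
      Real.sq_sqrt hba]
    ring
  have habs : 0 ≤ ∫ t, |g t| ∂μ := integral_nonneg fun t => abs_nonneg _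
  calc (∫ t in Set.Ioc a b, |g t|) ^ 2
      ≤ ((∫ t, g t ^ 2 ∂μ) ^ ((1:ℝ)/2) * (b - a) ^ ((1:ℝ)/2)) ^ 2 := by
        apply pow_le_pow_left₀ habs
        simpa [one_div] using H
    _ = (b - a) * ∫ t in Set.Ioc a b, g t ^ 2 := hsq

private lemma key_bound (X X' : ℝ → ℝ) (hX2 : MemLp X 2 volume)
    (hX'2 : MemLp X' 2 volume)
    (hFTC : ∀ a b : ℝ, X b - X a = ∫ t in a..b, X' t)
    {ε : ℝ} (hε : 0 < ε) (hε1 : ε ≤ 1) (a : ℝ) :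
    X a ^ 2 ≤ (2 / ε) *
      ((∫ t in Set.Ioc a (a + ε), X t ^ 2) + ∫ t in Set.Ioc a (a + ε), X' t ^ 2) := by
  set c := ∫ t in Set.Ioc a (a + ε), X' t ^ 2 with hc_def
  have hc : 0 ≤ c := integral_nonneg fun t => sq_nonneg _
  have hX'sq : Integrable (fun t => X' t ^ 2) volume := hX'2.integrable_sq
  have hXsq : Integrable (fun t => X t ^ 2) volume := hX2.integrable_sq
  -- pointwise bound
  have hpt : ∀ t ∈ Set.Ioc a (a + ε), X a ^ 2 ≤ 2 * X t ^ 2 + 2 * ε * c := by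
    intro t ht
    have hat : a ≤ t := ht.1.le
    have htb : t ≤ a + ε := ht.2
    have hXa : X a = X t - ∫ s in a..t, X' s := by
      have := hFTC a t; linarith
    have hIone : |∫ s in a..t, X' s| ≤ ∫ s in Set.Ioc a t, |X' s| := by
      rw [intervalIntegral.integral_of_le hat]
      simpa [Real.norm_eq_abs] using
        norm_integral_le_integral_norm (μ := volume.restrict (Set.Ioc a t)) X'

    have hItwo : (∫ s in Set.Ioc a t, |X' s|) ^ 2 ≤ (t - a) * ∫ s in Set.Ioc a t, X' s ^ 2 :=
      cs_aux X' hX'2 a t hat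
    have hIthree : (∫ s in Set.Ioc a t, X' s ^ 2) ≤ c := by
      apply setIntegral_mono_set (hX'sq.integrableOn)
        (Eventually.of_forall fun s => sq_nonneg _)
      exact HasSubset.Subset.eventuallyLE (Set.Ioc_subset_Ioc_right htb)
    have hI2nonneg : 0 ≤ ∫ s in Set.Ioc a t, X' s ^ 2 :=
      integral_nonneg fun s => sq_nonneg _
    have hsq : (∫ s in a..t, X' s) ^ 2 ≤ ε * c := by
      have h1 : (∫ s in a..t, X' s) ^ 2 ≤ (∫ s in Set.Ioc a t, |X' s|) ^ 2 := by
        rw [← sq_abs]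
        exact pow_le_pow_left₀ (abs_nonneg _) hIone 2
      have h2 : (t - a) * (∫ s in Set.Ioc a t, X' s ^ 2) ≤ ε * c := by
        apply mul_le_mul (by linarith) hIthree hI2nonneg (by linarith)
      linarith
    rw [hXa]
    nlinarith [sq_nonneg (X t + ∫ s in a..t, X' s), hsq]
  -- integrate the pointwise bound over the interval
  have hIoc_meas : (volume (Set.Ioc a (a + ε))).toReal = ε := by
    simp [Real.volume_Ioc, ENNReal.toReal_ofReal hε.le]
  have hL : ∫ _ in Set.Ioc a (a + ε), X a ^ 2 = ε * X a ^ 2 := by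
    rw [setIntegral_const, measureReal_def, hIoc_meas, smul_eq_mul]
  have hRint : IntegrableOn (fun t => 2 * X t ^ 2 + 2 * ε * c) (Set.Ioc a (a + ε)) volume :=
    (hXsq.const_mul 2).integrableOn.add (integrableOn_const measure_Ioc_lt_top.ne)
  have hmono : ∫ _ in Set.Ioc a (a + ε), X a ^ 2
      ≤ ∫ t in Set.Ioc a (a + ε), (2 * X t ^ 2 + 2 * ε * c) :=
    setIntegral_mono_on (integrableOn_const measure_Ioc_lt_top.ne) hRint
      measurableSet_Ioc hpt
  have hR : ∫ t in Set.Ioc a (a + ε), (2 * X t ^ 2 + 2 * ε * c)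
      = 2 * (∫ t in Set.Ioc a (a + ε), X t ^ 2) + ε * (2 * ε * c) := by
    rw [integral_add ((hXsq.const_mul 2).integrableOn) (integrableOn_const measure_Ioc_lt_top.ne),
      integral_const_mul, setIntegral_const, measureReal_def, hIoc_meas, smul_eq_mul]
  have hP : 0 ≤ ∫ t in Set.Ioc a (a + ε), X t ^ 2 := integral_nonneg fun t => sq_nonneg _
  have hmain : ε * X a ^ 2 ≤ 2 * (∫ t in Set.Ioc a (a + ε), X t ^ 2) + 2 * ε ^ 2 * c := by
    rw [hL] at hmono
    rw [hR] at hmono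
    nlinarith
  have hε2 : ε ^ 2 ≤ 1 := by nlinarith
  rw [div_mul_eq_mul_div, le_div_iff₀ hε]
  nlinarith [hmain, mul_nonneg hc (by linarith : (0:ℝ) ≤ 1 - ε ^ 2)]

/-- there exists `C > 0` such that for every `X ∈ H¹(ℝ)` (continuous
representative, with weak derivative `X' ∈ L²` in the sense of the fundamental theorem of
calculus) and every `ε ∈ (0,1]`, the sampled sequence `(X(εn))_{n∈ℤ}` lies in `l²(ℤ)` with
`‖(X(εn))_n‖_{l²} ≤ C ε^{−1/2} ‖X‖_{H¹}`. -/
theorem sampling_H1_to_l2 :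
    ∃ C : ℝ, 0 < C ∧
      ∀ X X' : ℝ → ℝ, Continuous X →
        MeasureTheory.MemLp X 2 MeasureTheory.volume →
        MeasureTheory.MemLp X' 2 MeasureTheory.volume →
        (∀ a b : ℝ, X b - X a = ∫ t in a..b, X' t) →
        ∀ ε : ℝ, ε ∈ Set.Ioc (0 : ℝ) 1 →
          Summable (fun n : ℤ => (X (ε * n)) ^ 2) ∧
          Real.sqrt (∑' n : ℤ, (X (ε * n)) ^ 2) ≤
            C * ε ^ (-(1 : ℝ)/2) *
              Real.sqrt ((∫ x : ℝ, (X x) ^ 2) + ∫ x : ℝ, (X' x) ^ 2) := by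

  refine ⟨Real.sqrt 2, Real.sqrt_pos.2 two_pos, ?_⟩
  intro X X' hXc hX2 hX'2 hFTC ε hε
  obtain ⟨hε0, hε1⟩ := hε
  set A := ∫ x : ℝ, X x ^ 2 with hA
  set B := ∫ x : ℝ, X' x ^ 2 with hB
  have hXsq : Integrable (fun t => X t ^ 2) volume := hX2.integrable_sq
  have hX'sq : Integrable (fun t => X' t ^ 2) volume := hX'2.integrable_sq
  have hA0 : 0 ≤ A := integral_nonneg fun t => sq_nonneg _
  have hB0 : 0 ≤ B := integral_nonneg fun t => sq_nonneg _
  set I : ℤ → Set ℝ := fun n => Set.Ioc (ε * n) (ε * n + ε) with hI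
  -- partial sums of set integrals of nonneg functions are bounded by the full integral
  have hsum : ∀ f : ℝ → ℝ, Integrable f volume → (∀ x, 0 ≤ f x) →
      ∀ s : Finset ℤ, ∑ n ∈ s, ∫ t in I n, f t ≤ ∫ t, f t := by
    intro f hf hf0 s
    have hkey : ∀ p q : ℤ, p < q → ε * p + ε ≤ ε * q := by
      intro p q h
      have h1 : (p : ℝ) + 1 ≤ q := by exact_mod_cast h
      nlinarith
    have hd : (↑s : Set ℤ).Pairwise (Function.onFun Disjoint I) := by
      intro m _ n _ hmn
      simp only [Function.onFun, hI, Set.Ioc_disjoint_Ioc]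
      rcases hmn.lt_or_gt with h | h
      · calc min (ε * m + ε) (ε * n + ε) ≤ ε * m + ε := min_le_left _ _
          _ ≤ ε * n := hkey m n h
          _ ≤ max (ε * m) (ε * n) := le_max_right _ _
      · calc min (ε * m + ε) (ε * n + ε) ≤ ε * n + ε := min_le_right _ _
          _ ≤ ε * m := hkey n m h
          _ ≤ max (ε * m) (ε * n) := le_max_left _ _
    rw [← integral_biUnion_finset s (fun n _ => measurableSet_Ioc) hd
      (fun n _ => hf.integrableOn)]
    exact setIntegral_le_integral hf (Eventually.of_forall hf0)
  have hbound : ∀ s : Finset ℤ, ∑ n ∈ s, X (ε * n) ^ 2 ≤ (2 / ε) * (A + B) := by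
    intro s
    have h1 := hsum _ hXsq (fun t => sq_nonneg _) s
    have h2 := hsum _ hX'sq (fun t => sq_nonneg _) s
    have hpos : (0 : ℝ) ≤ 2 / ε := by positivity
    calc ∑ n ∈ s, X (ε * n) ^ 2
        ≤ ∑ n ∈ s, (2 / ε) * ((∫ t in I n, X t ^ 2) + ∫ t in I n, X' t ^ 2) :=
          Finset.sum_le_sum fun n _ =>
            key_bound X X' hX2 hX'2 hFTC hε0 hε1 (ε * n)
      _ = (2 / ε) * ((∑ n ∈ s, ∫ t in I n, X t ^ 2) + ∑ n ∈ s, ∫ t in I n, X' t ^ 2) := by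
          rw [← Finset.sum_add_distrib, Finset.mul_sum]
      _ ≤ (2 / ε) * (A + B) := by
          apply mul_le_mul_of_nonneg_left _ hpos
          linarith
  have hSummable : Summable (fun n : ℤ => X (ε * n) ^ 2) :=
    summable_of_sum_le (fun n => sq_nonneg _) hbound
  refine ⟨hSummable, ?_⟩
  have hT : ∑' n : ℤ, X (ε * n) ^ 2 ≤ (2 / ε) * (A + B) :=
    Summable.tsum_le_of_sum_le hSummable hbound
  calc Real.sqrt (∑' n : ℤ, X (ε * n) ^ 2)
      ≤ Real.sqrt ((2 / ε) * (A + B)) := Real.sqrt_le_sqrt hT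
    _ = Real.sqrt (2 / ε) * Real.sqrt (A + B) := Real.sqrt_mul (by positivity) _
    _ = Real.sqrt 2 * ε ^ (-(1 : ℝ)/2) * Real.sqrt (A + B) := by
        rw [Real.sqrt_div (by norm_num : (0:ℝ) ≤ 2)]
        congr 1
        rw [div_eq_mul_inv]
        congr 1
        rw [neg_div, Real.rpow_neg hε0.le, Real.sqrt_eq_rpow]
end

section
/- Let W ∈ C([−τ₀, τ₁], H^s(ℝ)) solve the log-KdV equation 2 W_τ + (1/12) W_ξξξ + (g(W))_ξ = 0, s ≥ 6 an integer, with W ≥ r_W > −1. Fix ε₀ ∈ (0,1], and for ε ∈ (0, ε₀] let 𝒲 ∈ C([−τ₀ε^{−3}, τ₁ε^{−3}], l²(ℤ)) satisfy, for some ε-independent constants r > −1 and R > 0, the bound r ≤ W(ε(n−t), ε³t) + 𝒲_n(t) ≤ R for all n ∈ ℤ and |t| in range. Define the nonlinear remainder ℛ_n(W, 𝒲)(t) := [Ṽ_ε'(W_n + 𝒲_n) − Ṽ_ε'(W_n)] − [Ṽ_ε'(W_{n−1} + 𝒲_{n−1}) − Ṽ_ε'(W_{n−1})] − [(1 + ε²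 g'(W_n)) 𝒲_n − (1 + ε² g'(W_{n−1})) 𝒲_{n−1}], where W_n := W(ε(n−t), ε³t). Then there exists a constant C_{r,R,W} > 0, independent of ε and not increasing as ε₀ shrinks, such that for all ε ∈ (0, ε₀] and t ∈ [−τ₀ε^{−3}, τ₁ε^{−3}], ‖ℛ(W, 𝒲)(t)‖_{l²} ≤ C_{r,R,W} ( ε² ‖𝒲(t)‖_{l²}² + ε⁴ ‖𝒲(t)‖_{l²} + ε^{9/2} ). -/
open MeasureTheory Real Filter Set
open scoped ENNReal

/-- `Ṽ_ε'(w) = (1+w)^{1+ε²} − 1`. -/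
noncomputable def Vp (ε w : ℝ) : ℝ := (1 + w) ^ (1 + ε ^ 2) - 1

/-- The log-KdV nonlinearity `g(W) = (1+W) log(1+W)`; `g'(W) = 1 + log(1+W)`. -/
noncomputable def gfun (w : ℝ) : ℝ := (1 + w) * Real.log (1 + w)

/-- `g'(w) = 1 + log(1+w)`. -/
noncomputable def gp (w : ℝ) : ℝ := 1 + Real.log (1 + w)

/-- `l²(ℤ)` norm of a bilateral sequence. -/
noncomputable def l2norm (x : ℤ → ℝ) : ℝ := Real.sqrt (∑' n : ℤ, (x n) ^ 2)

/-- `k`-th spatial derivative `∂_ξ^k W(ξ,τ)`. -/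
noncomputable def Dxi (W : ℝ → ℝ → ℝ) (k : ℕ) (ξ τ : ℝ) : ℝ :=
  iteratedDeriv k (fun x => W x τ) ξ

/-- `W ∈ C([−τ₀,τ₁], H^s(ℝ))`. -/
def RegCHs (W : ℝ → ℝ → ℝ) (s : ℕ) (τ₀ τ₁ : ℝ) : Prop :=
  Continuous (fun q : ℝ × ℝ => W q.1 q.2) ∧
  (∀ τ ∈ Set.Icc (-τ₀) τ₁, ContDiff ℝ s (fun x => W x τ) ∧
    ∀ k ≤ s, MeasureTheory.MemLp (fun x => Dxi W k x τ) 2 MeasureTheory.volume) ∧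
  ∃ B : ℝ, ∀ τ ∈ Set.Icc (-τ₀) τ₁, ∀ k ≤ s,
    MeasureTheory.eLpNorm (fun x => Dxi W k x τ) 2 MeasureTheory.volume ≤ ENNReal.ofReal B

/-- `W` solves the log-KdV equation `2 W_τ + (1/12) W_ξξξ + (g(W))_ξ = 0` on `[−τ₀,τ₁]`. -/
def SolvesLogKdV (W : ℝ → ℝ → ℝ) (τ₀ τ₁ : ℝ) : Prop :=
  ∀ ξ : ℝ, ∀ τ ∈ Set.Icc (-τ₀) τ₁,
    2 * deriv (fun s => W ξ s) τ + (1/12) * Dxi W 3 ξ τ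
      + deriv (fun x => gfun (W x τ)) ξ = 0

/-- The nonlinear remainder `ℛ_n(W,𝒲)(t)` of the FPU system around the log-KdV
approximation. -/
noncomputable def RemR (W : ℝ → ℝ → ℝ) (ε t : ℝ) (V : ℤ → ℝ) (n : ℤ) : ℝ :=
  (Vp ε (W (ε * ((n : ℝ) - t)) (ε ^ 3 * t) + V n)
      - Vp ε (W (ε * ((n : ℝ) - t)) (ε ^ 3 * t)))
    - (Vp ε (W (ε * ((n : ℝ) - 1 - t)) (ε ^ 3 * t) + V (n - 1))
      - Vp ε (W (ε * ((n : ℝ) - 1 - t)) (ε ^ 3 * t)))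
    - ((1 + ε ^ 2 * gp (W (ε * ((n : ℝ) - t)) (ε ^ 3 * t))) * V n
      - (1 + ε ^ 2 * gp (W (ε * ((n : ℝ) - 1 - t)) (ε ^ 3 * t))) * V (n - 1))


lemma integral_sq_le_of_eLpNorm_le {f : ℝ → ℝ} (hf : MemLp f 2 volume) {B : ℝ}
    (hB : eLpNorm f 2 volume ≤ ENNReal.ofReal B) :
    ∫ x, (f x) ^ 2 ≤ (max B 0) ^ 2 := by
  have h2 : (2 : ℝ≥0∞) ≠ 0 := by norm_num
  have h2' : (2 : ℝ≥0∞) ≠ ∞ := by norm_num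
  rw [hf.eLpNorm_eq_integral_rpow_norm h2 h2'] at hB
  have hIn : 0 ≤ ∫ a, ‖f a‖ ^ ((2:ℝ≥0∞)).toReal := by
    apply integral_nonneg; intro x; positivity
  have ha : (0:ℝ) ≤ (∫ a, ‖f a‖ ^ ((2:ℝ≥0∞)).toReal) ^ ((2:ℝ≥0∞)).toReal⁻¹ :=
    Real.rpow_nonneg hIn _
  have hB' : (∫ a, ‖f a‖ ^ ((2:ℝ≥0∞)).toReal) ^ ((2:ℝ≥0∞)).toReal⁻¹ ≤ max B 0 := by
    have := hB.trans (ENNReal.ofReal_le_ofReal (le_max_left B 0))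
    rwa [ENNReal.ofReal_le_ofReal_iff (le_max_right B 0)] at this
  have key : (∫ a, ‖f a‖ ^ ((2:ℝ≥0∞)).toReal) ≤ (max B 0) ^ 2 := by
    have := pow_le_pow_left₀ ha hB' 2
    calc (∫ a, ‖f a‖ ^ ((2:ℝ≥0∞)).toReal)
        = ((∫ a, ‖f a‖ ^ ((2:ℝ≥0∞)).toReal) ^ ((2:ℝ≥0∞)).toReal⁻¹) ^ (2:ℕ) := by
          rw [← Real.rpow_natCast (_ ^ _) 2, ← Real.rpow_mul hIn]
          norm_num
      _ ≤ (max B 0) ^ 2 := this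
  calc ∫ x, (f x) ^ 2 = ∫ a, ‖f a‖ ^ ((2:ℝ≥0∞)).toReal := by
        apply integral_congr_ae; filter_upwards with x
        rw [ENNReal.toReal_ofNat]
        rw [show ((2:ℝ)) = ((2:ℕ):ℝ) by norm_num, Real.rpow_natCast]
        simp [sq_abs]
    _ ≤ (max B 0) ^ 2 := key

lemma sq_le_int (u : ℝ → ℝ) (hu : ContDiff ℝ 1 u)
    (h2 : Integrable (fun x => (u x) ^ 2) volume)
    (h2' : Integrable (fun x => (deriv u x) ^ 2) volume) (x : ℝ) :
    (u x) ^ 2 ≤ (∫ y, (u y) ^ 2) + ∫ y, (deriv u y) ^ 2 := by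
  set g' : ℝ → ℝ := fun y => 2 * u y * deriv u y with hg'
  have hud : ∀ y, HasDerivAt u (deriv u y) y := fun y =>
    (hu.differentiable one_ne_zero y).hasDerivAt
  have hgd : ∀ y, HasDerivAt (fun z => (u z) ^ 2) (g' y) y := by
    intro y
    have := (hud y).fun_pow 2
    simpa [hg', mul_comm, mul_assoc, mul_left_comm] using this
  have hbound : ∀ y, |g' y| ≤ (u y) ^ 2 + (deriv u y) ^ 2 := by
    intro y
    calc |g' y| = 2 * |u y * deriv u y| := by simp only [hg', mul_assoc]; rw [abs_mul]; norm_num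
      _ ≤ (u y) ^ 2 + (deriv u y) ^ 2 := by
          rw [abs_mul]
          nlinarith [sq_nonneg (|u y| - |deriv u y|), sq_abs (u y), sq_abs (deriv u y),
            abs_nonneg (u y), abs_nonneg (deriv u y)]
  have hg'cont : Continuous g' := by
    have h1 : Continuous (deriv u) := hu.continuous_deriv le_rfl
    exact (continuous_const.mul (hu.continuous)).mul h1
  have hg'int : Integrable g' volume := by
    apply (h2.add h2').mono' (hg'cont.aestronglyMeasurable)
    filter_upwards with y
    simpa [Real.norm_eq_abs] using hbound y
  have habs : Integrable (fun y => |g' y|) volume := hg'int.abs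
  have hIabs : ∫ y, |g' y| ≤ (∫ y, (u y) ^ 2) + ∫ y, (deriv u y) ^ 2 := by
    rw [← integral_add h2 h2']
    exact integral_mono habs (h2.add h2') hbound
  have hfind : ∀ δ > (0:ℝ), ∃ y ≤ x, (u y) ^ 2 < δ := by
    intro δ hδ
    by_contra hcon
    push_neg at hcon
    have : Integrable (fun _ : ℝ => δ) (volume.restrict (Iic x)) := by
      apply (h2.restrict (s := Iic x)).mono' aestronglyMeasurable_const
      rw [ae_restrict_iff' measurableSet_Iic]
      filter_upwards with y hy
      rw [Real.norm_eq_abs, abs_of_pos hδ]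
      exact hcon y hy
    rw [integrable_const_iff] at this
    rcases this with h | h
    · exact hδ.ne' h
    · rw [isFiniteMeasure_restrict, Real.volume_Iic] at h
      exact h rfl
  refine le_of_forall_pos_le_add ?_
  intro δ hδ
  obtain ⟨y, hyx, hyδ⟩ := hfind δ hδ
  have hftc : ∫ z in y..x, g' z = (u x) ^ 2 - (u y) ^ 2 :=
    intervalIntegral.integral_eq_sub_of_hasDerivAt (fun z _ => hgd z)
      hg'int.intervalIntegrable
  have h1 : |∫ z in y..x, g' z| ≤ ∫ z, |g' z| := by
    calc |∫ z in y..x, g' z| ≤ ∫ z in y..x, |g' z| :=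
          intervalIntegral.abs_integral_le_integral_abs hyx
      _ = ∫ z in Ioc y x, |g' z| := intervalIntegral.integral_of_le hyx
      _ ≤ ∫ z, |g' z| := setIntegral_le_integral habs
          (by filter_upwards with z using abs_nonneg _)
  have := hftc ▸ h1
  have h2'' : (u x) ^ 2 - (u y) ^ 2 ≤ ∫ z, |g' z| := (abs_le.mp this).2
  nlinarith [hIabs]

lemma rpow_le_A {m z a : ℝ} (hm : -1 < m) (hmz : m ≤ z) (ha : a ≤ 0) (hma : -1 ≤ a) :
    (1 + z) ^ a ≤ max (1 + m)⁻¹ 1 := by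
  have hm0 : (0:ℝ) < 1 + m := by linarith
  have hz0 : (0:ℝ) < 1 + z := by linarith
  rcases le_or_gt 1 (1 + z) with h | h
  · exact le_trans (Real.rpow_le_one_of_one_le_of_nonpos h ha) (le_max_right _ _)
  · have h1 : (1 + z) ^ a ≤ (1 + m) ^ a :=
      Real.rpow_le_rpow_of_nonpos hm0 (by linarith) ha
    have h2 : (1 + m) ^ a ≤ (1 + m) ^ (-1 : ℝ) :=
      Real.rpow_le_rpow_of_exponent_ge hm0 (by linarith) hma
    rw [Real.rpow_neg_one] at h2
    exact le_trans (h1.trans h2) (le_max_left _ _)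

lemma hasDerivAt_Vp {ε w : ℝ} (hw : 0 < 1 + w) :
    HasDerivAt (fun z => Vp ε z) ((1 + ε ^ 2) * (1 + w) ^ (ε ^ 2)) w := by
  have h1 : HasDerivAt (fun z : ℝ => 1 + z) 1 w := (hasDerivAt_id w).const_add 1
  have h2 := (h1.rpow_const (p := 1 + ε ^ 2) (Or.inl hw.ne'))
  have h3 := h2.sub_const 1
  refine h3.congr_deriv ?_
  ring_nf

/-- Quadratic Taylor estimate. -/
lemma quad_est {ε m Lup Wv V : ℝ} (hm : -1 < m) (hε : 0 < ε) (hε1 : ε ≤ 1)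
    (hW : Wv ∈ Icc m Lup) (hWV : Wv + V ∈ Icc m Lup) :
    |Vp ε (Wv + V) - Vp ε Wv - (1 + ε ^ 2) * (1 + Wv) ^ (ε ^ 2) * V|
      ≤ 2 * max (1 + m)⁻¹ 1 * ε ^ 2 * V ^ 2 := by
  set A := max (1 + m)⁻¹ 1 with hA
  have hA1 : (1:ℝ) ≤ A := le_max_right _ _
  have hε2 : ε ^ 2 ≤ 1 := by nlinarith
  have hseg : ∀ w ∈ uIcc (0:ℝ) V, Wv + w ∈ Icc m Lup := by
    intro w hw
    rcases Set.mem_uIcc.mp hw with ⟨h1, h2⟩ | ⟨h1, h2⟩ <;>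
      exact ⟨by cases hW with | intro a b => cases hWV with | intro c d => linarith,
             by cases hW with | intro a b => cases hWV with | intro c d => linarith⟩
  have hpos : ∀ w ∈ uIcc (0:ℝ) V, (0:ℝ) < 1 + (Wv + w) := by
    intro w hw; have := (hseg w hw).1; linarith
  -- inner MVT: |f'(Wv+v) - f'(Wv)| ≤ 2*A*ε²*|v|
  set G : ℝ → ℝ := fun w => (1 + ε ^ 2) * (1 + (Wv + w)) ^ (ε ^ 2) with hG
  have hGderiv : ∀ w ∈ uIcc (0:ℝ) V,
      HasDerivWithinAt G ((1 + ε ^ 2) * (ε ^ 2 * (1 + (Wv + w)) ^ (ε ^ 2 - 1)))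
        (uIcc (0:ℝ) V) w := by
    intro w hw
    have h1 : HasDerivAt (fun z : ℝ => 1 + (Wv + z)) 1 w := by
      simpa [add_assoc] using ((hasDerivAt_id w).const_add (1 + Wv))
    have h2 := h1.rpow_const (p := ε ^ 2) (Or.inl (hpos w hw).ne')
    have h3 := h2.const_mul (1 + ε ^ 2)
    refine (HasDerivAt.hasDerivWithinAt ?_)
    refine h3.congr_deriv ?_
    ring
  have hGbound : ∀ w ∈ uIcc (0:ℝ) V,
      ‖(1 + ε ^ 2) * (ε ^ 2 * (1 + (Wv + w)) ^ (ε ^ 2 - 1))‖ ≤ 2 * A * ε ^ 2 := by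
    intro w hw
    have hr : (1 + (Wv + w)) ^ (ε ^ 2 - 1) ≤ A := by
      have := rpow_le_A (z := Wv + w) (a := ε ^ 2 - 1) hm (hseg w hw).1
        (by nlinarith) (by nlinarith)
      simpa [hA] using this
    have hrpos : (0:ℝ) ≤ (1 + (Wv + w)) ^ (ε ^ 2 - 1) :=
      Real.rpow_nonneg (le_of_lt (hpos w hw)) _
    rw [Real.norm_eq_abs, abs_of_nonneg (by positivity)]
    have ha : ε ^ 2 * (1 + (Wv + w)) ^ (ε ^ 2 - 1) ≤ ε ^ 2 * A :=
      mul_le_mul_of_nonneg_left hr (sq_nonneg ε)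
    have hc0 : (0:ℝ) ≤ ε ^ 2 * (1 + (Wv + w)) ^ (ε ^ 2 - 1) := by positivity
    nlinarith [hc0, ha, hε2]
  -- outer MVT for F(v) = Vp ε (Wv+v) - f'(Wv) * v
  set c := (1 + ε ^ 2) * (1 + Wv) ^ (ε ^ 2) with hc
  set F : ℝ → ℝ := fun v => Vp ε (Wv + v) - c * v with hF
  have hFderiv : ∀ v ∈ uIcc (0:ℝ) V,
      HasDerivWithinAt F (G v - c) (uIcc (0:ℝ) V) v := by
    intro v hv
    have h1 : HasDerivAt (fun z : ℝ => Wv + z) 1 v := by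
      simpa using (hasDerivAt_id v).const_add Wv
    have h2 := (hasDerivAt_Vp (ε := ε) (hpos v hv)).comp v h1
    have h4 : HasDerivAt (fun z : ℝ => c * z) c v := by
      simpa using (hasDerivAt_id v).const_mul c
    have h3 := h2.sub h4
    refine HasDerivAt.hasDerivWithinAt ?_
    refine h3.congr_deriv ?_
    simp only [hG, mul_one]
  have hFbound : ∀ v ∈ uIcc (0:ℝ) V, ‖G v - c‖ ≤ (2 * A * ε ^ 2) * |V| := by
    intro v hv
    have h0 : (0:ℝ) ∈ uIcc (0:ℝ) V := left_mem_uIcc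
    have := (convex_uIcc (0:ℝ) V).norm_image_sub_le_of_norm_hasDerivWithin_le
      hGderiv hGbound h0 hv
    have hG0 : G 0 = c := by simp [hG, hc]
    rw [hG0] at this
    calc ‖G v - c‖ ≤ 2 * A * ε ^ 2 * ‖v - 0‖ := this
      _ ≤ (2 * A * ε ^ 2) * |V| := by
          rw [Real.norm_eq_abs, sub_zero]
          have : |v| ≤ |V| := by
            rw [abs_le]
            rcases Set.mem_uIcc.mp hv with ⟨h1, h2⟩ | ⟨h1, h2⟩ <;>
              constructor <;> nlinarith [le_abs_self V, neg_abs_le V]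
          have hAε : (0:ℝ) ≤ 2 * A * ε ^ 2 := by nlinarith [sq_nonneg ε]
          exact mul_le_mul_of_nonneg_left this hAε
  have hmain := (convex_uIcc (0:ℝ) V).norm_image_sub_le_of_norm_hasDerivWithin_le
    hFderiv hFbound left_mem_uIcc right_mem_uIcc
  have hF0 : F 0 = Vp ε Wv := by simp [hF]
  have hFV : F V = Vp ε (Wv + V) - c * V := by simp [hF]
  rw [hF0, hFV] at hmain
  rw [Real.norm_eq_abs, Real.norm_eq_abs, sub_zero] at hmain
  calc |Vp ε (Wv + V) - Vp ε Wv - (1 + ε ^ 2) * (1 + Wv) ^ (ε ^ 2) * V|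
      = |Vp ε (Wv + V) - c * V - Vp ε Wv| := by rw [hc]; ring_nf
    _ ≤ 2 * A * ε ^ 2 * |V| * |V| := hmain
    _ = 2 * A * ε ^ 2 * V ^ 2 := by rw [mul_assoc, ← abs_mul, ← sq, abs_of_nonneg (sq_nonneg V)]

/-- Coefficient estimate: `|f'(W) - 1 - ε² g'(W)| ≤ Bq ε⁴`. -/
lemma coeff_est {ε m Lup Wv : ℝ} (hm : -1 < m) (hε : 0 < ε) (hε1 : ε ≤ 1)
    (hW : Wv ∈ Icc m Lup) :
    |(1 + ε ^ 2) * (1 + Wv) ^ (ε ^ 2) - 1 - ε ^ 2 * gp Wv|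
      ≤ (Real.exp (max |Real.log (1 + m)| |Real.log (1 + Lup)|)
          * (2 * max |Real.log (1 + m)| |Real.log (1 + Lup)|
            + 2 * (max |Real.log (1 + m)| |Real.log (1 + Lup)|) ^ 2)) * ε ^ 4 := by
  set Λ := max |Real.log (1 + m)| |Real.log (1 + Lup)| with hΛdef
  set L := Real.log (1 + Wv) with hLdef
  have hm0 : (0:ℝ) < 1 + m := by linarith
  have hW0 : (0:ℝ) < 1 + Wv := by have := hW.1; linarith
  have hLle : |L| ≤ Λ := by
    have h1 : Real.log (1 + m) ≤ L := Real.log_le_log hm0 (by have := hW.1; linarith)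
    have h2 : L ≤ Real.log (1 + Lup) := Real.log_le_log hW0 (by have := hW.2; linarith)
    rw [abs_le]
    constructor
    · calc -Λ ≤ -|Real.log (1 + m)| := by
            simp only [neg_le_neg_iff]; exact le_max_left _ _
        _ ≤ Real.log (1 + m) := neg_abs_le _
        _ ≤ L := h1
    · calc L ≤ Real.log (1 + Lup) := h2
        _ ≤ |Real.log (1 + Lup)| := le_abs_self _
        _ ≤ Λ := le_max_right _ _
  have hΛ0 : (0:ℝ) ≤ Λ := le_trans (abs_nonneg _) hLle
  set Bq := Real.exp Λ * (2 * Λ + 2 * Λ ^ 2) with hBqdef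
  have hBq0 : (0:ℝ) ≤ Bq := by
    have := Real.exp_pos Λ
    nlinarith [sq_nonneg Λ]
  -- the function q and its derivatives
  set q : ℝ → ℝ := fun a => (1 + a) * Real.exp (a * L) - 1 - a * (1 + L) with hq
  set q' : ℝ → ℝ := fun a => 1 * Real.exp (a * L) + (1 + a) * (Real.exp (a * L) * L)
      - 1 * (1 + L) with hq'
  have hqderiv : ∀ a : ℝ, HasDerivAt q (q' a) a := by
    intro a
    have h1 : HasDerivAt (fun x : ℝ => 1 + x) 1 a := (hasDerivAt_id a).const_add 1
    have h2 : HasDerivAt (fun x : ℝ => Real.exp (x * L)) (Real.exp (a * L) * L) a := by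
      simpa using ((hasDerivAt_id a).mul_const L).exp
    have h3 : HasDerivAt (fun x : ℝ => x * (1 + L)) (1 * (1 + L)) a :=
      (hasDerivAt_id a).mul_const (1 + L)
    exact ((h1.mul h2).sub_const 1).sub h3
  have hq'deriv : ∀ a : ℝ, HasDerivAt q'
      (Real.exp (a * L) * (2 * L + (1 + a) * L ^ 2)) a := by
    intro a
    have h2 : HasDerivAt (fun x : ℝ => Real.exp (x * L)) (Real.exp (a * L) * L) a := by
      simpa using ((hasDerivAt_id a).mul_const L).exp
    have h1 : HasDerivAt (fun x : ℝ => 1 + x) 1 a := (hasDerivAt_id a).const_add 1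
    have h4 := (h2.const_mul 1).add (h1.mul (h2.mul_const L))
    have h5 := h4.sub_const (1 * (1 + L))
    refine h5.congr_deriv ?_
    ring
  have hq'0 : q' 0 = 0 := by simp [hq']
  have hq0 : q 0 = 0 := by simp [hq]
  -- bound |q''| on [0,1]
  have hq''bound : ∀ a ∈ Icc (0:ℝ) 1,
      ‖Real.exp (a * L) * (2 * L + (1 + a) * L ^ 2)‖ ≤ Bq := by
    intro a ha
    rw [Real.norm_eq_abs, abs_mul, abs_of_pos (Real.exp_pos _)]
    have he : Real.exp (a * L) ≤ Real.exp Λ := by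
      apply Real.exp_le_exp.mpr
      calc a * L ≤ |a * L| := le_abs_self _
        _ = |a| * |L| := abs_mul _ _
        _ ≤ 1 * Λ := mul_le_mul (by rw [abs_of_nonneg ha.1]; exact ha.2) hLle
            (abs_nonneg _) zero_le_one
        _ = Λ := one_mul _
    have hpoly : |2 * L + (1 + a) * L ^ 2| ≤ 2 * Λ + 2 * Λ ^ 2 := by
      have h1 : |(1 + a) * L ^ 2| ≤ 2 * Λ ^ 2 := by
        rw [abs_mul, abs_of_nonneg (by linarith [ha.1] : (0:ℝ) ≤ 1 + a),
          abs_of_nonneg (sq_nonneg L)]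
        have : L ^ 2 ≤ Λ ^ 2 := by nlinarith [sq_abs L, abs_nonneg L]
        nlinarith [ha.2, sq_nonneg L]
      calc |2 * L + (1 + a) * L ^ 2| ≤ |2 * L| + |(1 + a) * L ^ 2| := abs_add_le _ _
        _ ≤ 2 * Λ + 2 * Λ ^ 2 := by
            rw [abs_mul]
            have : |(2:ℝ)| = 2 := by norm_num
            rw [this]
            linarith [hLle, h1]
    calc Real.exp (a * L) * |2 * L + (1 + a) * L ^ 2|
        ≤ Real.exp Λ * (2 * Λ + 2 * Λ ^ 2) := by
          apply mul_le_mul he hpoly (abs_nonneg _) (le_of_lt (Real.exp_pos _))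
      _ = Bq := hBqdef.symm
  -- |q' a| ≤ Bq * a on [0,1]
  have hq'bound : ∀ a ∈ Icc (0:ℝ) 1, |q' a| ≤ Bq * a := by
    intro a ha
    have := (convex_Icc (0:ℝ) 1).norm_image_sub_le_of_norm_hasDerivWithin_le
      (fun x _ => (hq'deriv x).hasDerivWithinAt) hq''bound
      (left_mem_Icc.mpr zero_le_one) ha
    rw [hq'0] at this
    simpa [Real.norm_eq_abs, abs_of_nonneg ha.1] using this
  -- |q(ε²)| ≤ Bq ε⁴
  have hε2mem : ε ^ 2 ∈ Icc (0:ℝ) 1 := ⟨sq_nonneg ε, by nlinarith⟩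
  have hq'bound2 : ∀ a ∈ Icc (0:ℝ) (ε ^ 2), ‖q' a‖ ≤ Bq * ε ^ 2 := by
    intro a ha
    have hmem : a ∈ Icc (0:ℝ) 1 := ⟨ha.1, le_trans ha.2 hε2mem.2⟩
    rw [Real.norm_eq_abs]
    calc |q' a| ≤ Bq * a := hq'bound a hmem
      _ ≤ Bq * ε ^ 2 := mul_le_mul_of_nonneg_left ha.2 hBq0
  have hmain := (convex_Icc (0:ℝ) (ε ^ 2)).norm_image_sub_le_of_norm_hasDerivWithin_le
    (fun x _ => (hqderiv x).hasDerivWithinAt) hq'bound2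
    (left_mem_Icc.mpr (sq_nonneg ε)) (right_mem_Icc.mpr (sq_nonneg ε))
  rw [hq0] at hmain
  rw [Real.norm_eq_abs, Real.norm_eq_abs, sub_zero, sub_zero,
    abs_of_nonneg (sq_nonneg ε)] at hmain
  have hrpow : (1 + Wv) ^ (ε ^ 2 : ℝ) = Real.exp (ε ^ 2 * L) := by
    rw [Real.rpow_def_of_pos hW0, mul_comm]
  have heq : (1 + ε ^ 2) * (1 + Wv) ^ (ε ^ 2 : ℝ) - 1 - ε ^ 2 * gp Wv = q (ε ^ 2) := by
    rw [hrpow, hq]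
    simp only [gp, hLdef]
    try ring
  rw [heq]
  calc |q (ε ^ 2)| ≤ Bq * ε ^ 2 * ε ^ 2 := hmain
    _ = Bq * ε ^ 4 := by ring

lemma my_sqrt_add {x y : ℝ} (hx : 0 ≤ x) (hy : 0 ≤ y) :
    Real.sqrt (x + y) ≤ Real.sqrt x + Real.sqrt y := by
  have h : x + y ≤ (Real.sqrt x + Real.sqrt y) ^ 2 := by
    nlinarith [Real.sq_sqrt hx, Real.sq_sqrt hy, Real.sqrt_nonneg x, Real.sqrt_nonneg y]
  calc Real.sqrt (x + y) ≤ Real.sqrt ((Real.sqrt x + Real.sqrt y) ^ 2) :=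
        Real.sqrt_le_sqrt h
    _ = Real.sqrt x + Real.sqrt y := Real.sqrt_sq (by positivity)

lemma exists_sup_bound {W : ℝ → ℝ → ℝ} {s : ℕ} {τ₀ τ₁ : ℝ} (hs : 1 ≤ s)
    (hreg : RegCHs W s τ₀ τ₁) :
    ∃ M : ℝ, 0 ≤ M ∧ ∀ ξ : ℝ, ∀ τ ∈ Set.Icc (-τ₀) τ₁, |W ξ τ| ≤ M := by
  obtain ⟨-, hmem, B, hB⟩ := hreg
  refine ⟨Real.sqrt (2 * (max B 0) ^ 2), Real.sqrt_nonneg _, ?_⟩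
  intro ξ τ hτ
  obtain ⟨hcd, hℒ⟩ := hmem τ hτ
  set u : ℝ → ℝ := fun x => W x τ with hu
  have h0eq : (fun x => Dxi W 0 x τ) = u := by
    funext x; simp [Dxi, iteratedDeriv_zero, hu]
  have h1eq : (fun x => Dxi W 1 x τ) = fun x => deriv u x := by
    funext x; simp [Dxi, iteratedDeriv_one, hu]
  have hu2 : MemLp u 2 volume := h0eq ▸ hℒ 0 (Nat.zero_le s)
  have hu2' : MemLp (fun x => deriv u x) 2 volume := h1eq ▸ hℒ 1 hs
  have hi2 : Integrable (fun x => (u x) ^ 2) volume := hu2.integrable_sq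
  have hi2' : Integrable (fun x => (deriv u x) ^ 2) volume := hu2'.integrable_sq
  have hcd1 : ContDiff ℝ 1 u := hcd.of_le (by exact_mod_cast hs)
  have hkey := sq_le_int u hcd1 hi2 hi2' ξ
  have hb0 : ∫ y, (u y) ^ 2 ≤ (max B 0) ^ 2 :=
    integral_sq_le_of_eLpNorm_le hu2 (h0eq ▸ hB τ hτ 0 (Nat.zero_le s))
  have hb1 : ∫ y, (deriv u y) ^ 2 ≤ (max B 0) ^ 2 :=
    integral_sq_le_of_eLpNorm_le hu2' (h1eq ▸ hB τ hτ 1 hs)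
  have : (u ξ) ^ 2 ≤ 2 * (max B 0) ^ 2 := by linarith
  calc |W ξ τ| = Real.sqrt ((u ξ) ^ 2) := (Real.sqrt_sq_eq_abs _).symm
    _ ≤ Real.sqrt (2 * (max B 0) ^ 2) := Real.sqrt_le_sqrt this

set_option maxHeartbeats 2000000 in
/-- bound for the nonlinear remainder: there is `C_{r,R,W} > 0`, independent
of `ε` and of `ε₀`, such that for every `ε₀ ∈ (0,1]`, every perturbation family `𝒲` that is
continuous with values in `l²(ℤ)` and keeps `W + 𝒲` within `[r, R]`, and all
`ε ∈ (0,ε₀]` and `t ∈ [−τ₀ε^{−3}, τ₁ε^{−3}]`,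
`‖ℛ(W,𝒲)(t)‖_{l²} ≤ C (ε²‖𝒲(t)‖² + ε⁴‖𝒲(t)‖ + ε^{9/2})`. -/
theorem nonlinear_remainder_bound (τ₀ τ₁ : ℝ) (hτ₀ : 0 ≤ τ₀) (hτ₁ : 0 ≤ τ₁)
    (s : ℕ) (hs : 6 ≤ s) (W : ℝ → ℝ → ℝ)
    (hreg : RegCHs W s τ₀ τ₁)
    (hpde : SolvesLogKdV W τ₀ τ₁)
    (rW : ℝ) (hrW : -1 < rW)
    (hWlow : ∀ ξ : ℝ, ∀ τ ∈ Set.Icc (-τ₀) τ₁, rW ≤ W ξ τ)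
    (r R : ℝ) (hr : -1 < r) (hR : 0 < R) :
    ∃ C > (0 : ℝ), ∀ ε₀ ∈ Set.Ioc (0 : ℝ) 1,
      ∀ 𝒲 : ℝ → ℝ → ℤ → ℝ,
        (∀ ε ∈ Set.Ioc (0 : ℝ) ε₀,
          (∀ t ∈ Set.Icc (-(τ₀/ε ^ 3)) (τ₁/ε ^ 3), Memℓp (𝒲 ε t) 2) ∧
          (∀ n : ℤ, ContinuousOn (fun t => 𝒲 ε t n)
            (Set.Icc (-(τ₀/ε ^ 3)) (τ₁/ε ^ 3))) ∧
          (∀ t ∈ Set.Icc (-(τ₀/ε ^ 3)) (τ₁/ε ^ 3), ∀ n : ℤ,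
            r ≤ W (ε * ((n : ℝ) - t)) (ε ^ 3 * t) + 𝒲 ε t n ∧
            W (ε * ((n : ℝ) - t)) (ε ^ 3 * t) + 𝒲 ε t n ≤ R)) →
        ∀ ε ∈ Set.Ioc (0 : ℝ) ε₀, ∀ t ∈ Set.Icc (-(τ₀/ε ^ 3)) (τ₁/ε ^ 3),
          l2norm (RemR W ε t (𝒲 ε t))
            ≤ C * (ε ^ 2 * (l2norm (𝒲 ε t)) ^ 2 + ε ^ 4 * l2norm (𝒲 ε t)
                + ε ^ ((9 : ℝ)/2)) := by
  obtain ⟨M, hM0, hMb⟩ := exists_sup_bound (le_trans (by norm_num) hs) hreg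
  set m : ℝ := min rW r with hmdef
  have hm : (-1 : ℝ) < m := lt_min hrW hr
  set Lup : ℝ := max M R with hLdef
  set A : ℝ := max (1 + m)⁻¹ 1 with hAdef
  have hA1 : (1:ℝ) ≤ A := le_max_right _ _
  set Λ : ℝ := max |Real.log (1 + m)| |Real.log (1 + Lup)| with hΛdef
  set Bq : ℝ := Real.exp Λ * (2 * Λ + 2 * Λ ^ 2) with hBqdef
  have hΛ0 : (0:ℝ) ≤ Λ := le_trans (abs_nonneg _) (le_max_left _ _)
  have hBq0 : (0:ℝ) ≤ Bq := by
    have := Real.exp_pos Λ; nlinarith [sq_nonneg Λ]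
  set c0 : ℝ := 2 * A with hc0def
  have hc00 : (0:ℝ) ≤ c0 := by simp [hc0def]; linarith
  set C : ℝ := 3 * (c0 + Bq) + 1 with hCdef
  have hmrW : m ≤ rW := min_le_left _ _
  have hmr : m ≤ r := min_le_right _ _
  have hMLup : M ≤ Lup := le_max_left _ _
  have hRLup : R ≤ Lup := le_max_right _ _
  clear_value m Lup A Λ Bq c0 C
  refine ⟨C, by simp only [hCdef]; nlinarith, ?_⟩
  intro ε₀ hε₀ 𝒲 h𝒲 ε hε t ht
  obtain ⟨hεpos, hεle⟩ := hε
  have hε1 : ε ≤ 1 := le_trans hεle hε₀.2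
  obtain ⟨hl2, -, hbd⟩ := h𝒲 ε ⟨hεpos, hεle⟩
  set V : ℤ → ℝ := 𝒲 ε t with hVdef
  -- τ in range
  have hε3 : (0:ℝ) < ε ^ 3 := by positivity
  have hτmem : ε ^ 3 * t ∈ Set.Icc (-τ₀) τ₁ := by
    constructor
    · have h1 := mul_le_mul_of_nonneg_left ht.1 hε3.le
      have h2 : ε ^ 3 * -(τ₀ / ε ^ 3) = -τ₀ := by field_simp; try ring
      linarith [h2 ▸ h1]
    · have h1 := mul_le_mul_of_nonneg_left ht.2 hε3.le
      have h2 : ε ^ 3 * (τ₁ / ε ^ 3) = τ₁ := by field_simp; try ring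
      linarith [h2 ▸ h1]
  -- the one-site nonlinear function
  set Wn : ℤ → ℝ := fun n => W (ε * ((n : ℝ) - t)) (ε ^ 3 * t) with hWndef
  set h : ℤ → ℝ := fun n => Vp ε (Wn n + V n) - Vp ε (Wn n)
      - (1 + ε ^ 2 * gp (Wn n)) * V n with hhdef
  have hWmem : ∀ n : ℤ, Wn n ∈ Set.Icc m Lup := by
    intro n
    constructor
    · exact le_trans hmrW (hWlow _ _ hτmem)
    · exact le_trans (le_trans (le_abs_self _) (hMb _ _ hτmem)) hMLup
  have hWVmem : ∀ n : ℤ, Wn n + V n ∈ Set.Icc m Lup := by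
    intro n
    obtain ⟨h1, h2⟩ := hbd t ht n
    exact ⟨le_trans hmr h1, le_trans h2 hRLup⟩
  -- per-site bound
  have hsite : ∀ n : ℤ, |h n| ≤ c0 * ε ^ 2 * (V n) ^ 2 + Bq * ε ^ 4 * |V n| := by
    intro n
    have hq := quad_est (V := V n) hm hεpos hε1 (hWmem n) (hWVmem n)
    rw [← hAdef] at hq
    have hc := coeff_est hm hεpos hε1 (hWmem n)
    rw [← hΛdef, ← hBqdef] at hc
    have hdecomp : h n = (Vp ε (Wn n + V n) - Vp ε (Wn n)
        - (1 + ε ^ 2) * (1 + Wn n) ^ (ε ^ 2) * V n)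
        + ((1 + ε ^ 2) * (1 + Wn n) ^ (ε ^ 2) - 1 - ε ^ 2 * gp (Wn n)) * V n := by
      simp only [hhdef]; ring
    calc |h n| ≤ |Vp ε (Wn n + V n) - Vp ε (Wn n)
          - (1 + ε ^ 2) * (1 + Wn n) ^ (ε ^ 2) * V n|
          + |((1 + ε ^ 2) * (1 + Wn n) ^ (ε ^ 2) - 1 - ε ^ 2 * gp (Wn n)) * V n| := by
          rw [hdecomp]; exact abs_add_le _ _
      _ ≤ 2 * A * ε ^ 2 * (V n) ^ 2 + (Bq * ε ^ 4) * |V n| := by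
          rw [abs_mul]
          have := mul_le_mul_of_nonneg_right hc (abs_nonneg (V n))
          exact add_le_add hq this
      _ = c0 * ε ^ 2 * (V n) ^ 2 + Bq * ε ^ 4 * |V n| := by rw [hc0def]
  -- summability of V²
  have hSsum : Summable (fun n : ℤ => (V n) ^ 2) := by
    have hmem := hl2 t ht
    have h2 : (0:ℝ) < (2 : ℝ≥0∞).toReal := by norm_num
    have := (memℓp_gen_iff h2).mp hmem
    have heq : ∀ n : ℤ, ‖V n‖ ^ (2 : ℝ≥0∞).toReal = (V n) ^ 2 := by
      intro n
      rw [ENNReal.toReal_ofNat, show ((2:ℝ)) = ((2:ℕ):ℝ) by norm_num,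
        Real.rpow_natCast, Real.norm_eq_abs, sq_abs]
    exact (summable_congr heq).mp this
  set S : ℝ := ∑' n : ℤ, (V n) ^ 2 with hSdef
  have hS0 : (0:ℝ) ≤ S := tsum_nonneg (fun n => sq_nonneg _)
  have hterm : ∀ n : ℤ, (V n) ^ 2 ≤ S :=
    fun n => hSsum.le_tsum n (fun m _ => sq_nonneg _)
  have hV4le : ∀ n : ℤ, (V n) ^ 4 ≤ S * (V n) ^ 2 := by
    intro n
    have := mul_le_mul_of_nonneg_right (hterm n) (sq_nonneg (V n))
    calc (V n) ^ 4 = (V n) ^ 2 * (V n) ^ 2 := by ring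
      _ ≤ S * (V n) ^ 2 := this
  have hV4sum : Summable (fun n : ℤ => (V n) ^ 4) :=
    Summable.of_nonneg_of_le (fun n => by positivity) hV4le (hSsum.mul_left S)
  have hV4tsum : ∑' n : ℤ, (V n) ^ 4 ≤ S ^ 2 := by
    calc ∑' n : ℤ, (V n) ^ 4 ≤ ∑' n : ℤ, S * (V n) ^ 2 :=
          Summable.tsum_le_tsum hV4le hV4sum (hSsum.mul_left S)
      _ = S * S := by rw [tsum_mul_left]
      _ = S ^ 2 := by ring
  -- h² bound and summability
  have hhsq : ∀ n : ℤ, (h n) ^ 2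
      ≤ 2 * c0 ^ 2 * ε ^ 4 * (V n) ^ 4 + 2 * Bq ^ 2 * ε ^ 8 * (V n) ^ 2 := by
    intro n
    have h1 := hsite n
    have h2 : (h n) ^ 2 ≤ (c0 * ε ^ 2 * (V n) ^ 2 + Bq * ε ^ 4 * |V n|) ^ 2 := by
      have := pow_le_pow_left₀ (abs_nonneg (h n)) h1 2
      rwa [sq_abs] at this
    have hxy : ∀ x y : ℝ, (x + y) ^ 2 ≤ 2 * x ^ 2 + 2 * y ^ 2 := by
      intro x y; nlinarith [sq_nonneg (x - y)]
    have h3 : (c0 * ε ^ 2 * (V n) ^ 2 + Bq * ε ^ 4 * |V n|) ^ 2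
        ≤ 2 * c0 ^ 2 * ε ^ 4 * (V n) ^ 4 + 2 * Bq ^ 2 * ε ^ 8 * (V n) ^ 2 := by
      calc (c0 * ε ^ 2 * (V n) ^ 2 + Bq * ε ^ 4 * |V n|) ^ 2
          ≤ 2 * (c0 * ε ^ 2 * (V n) ^ 2) ^ 2 + 2 * (Bq * ε ^ 4 * |V n|) ^ 2 := hxy _ _
        _ = 2 * c0 ^ 2 * ε ^ 4 * (V n) ^ 4 + 2 * Bq ^ 2 * ε ^ 8 * (V n) ^ 2 := by
            rw [mul_pow, mul_pow, mul_pow, mul_pow, sq_abs]; ring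
    linarith
  have hbsum : Summable (fun n : ℤ =>
      2 * c0 ^ 2 * ε ^ 4 * (V n) ^ 4 + 2 * Bq ^ 2 * ε ^ 8 * (V n) ^ 2) :=
    (hV4sum.mul_left _).add (hSsum.mul_left _)
  have hhsum : Summable (fun n : ℤ => (h n) ^ 2) :=
    Summable.of_nonneg_of_le (fun n => sq_nonneg _) hhsq hbsum
  have hhtsum : ∑' n : ℤ, (h n) ^ 2
      ≤ 2 * c0 ^ 2 * ε ^ 4 * S ^ 2 + 2 * Bq ^ 2 * ε ^ 8 * S := by
    calc ∑' n : ℤ, (h n) ^ 2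
        ≤ ∑' n : ℤ, (2 * c0 ^ 2 * ε ^ 4 * (V n) ^ 4 + 2 * Bq ^ 2 * ε ^ 8 * (V n) ^ 2) :=
          Summable.tsum_le_tsum hhsq hhsum hbsum
      _ = 2 * c0 ^ 2 * ε ^ 4 * (∑' n : ℤ, (V n) ^ 4) + 2 * Bq ^ 2 * ε ^ 8 * S := by
          rw [Summable.tsum_add (hV4sum.mul_left _) (hSsum.mul_left _), tsum_mul_left, tsum_mul_left]
      _ ≤ 2 * c0 ^ 2 * ε ^ 4 * S ^ 2 + 2 * Bq ^ 2 * ε ^ 8 * S := by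
          have : (0:ℝ) ≤ 2 * c0 ^ 2 * ε ^ 4 := by positivity
          nlinarith [hV4tsum]
  -- shift
  have hhsum' : Summable (fun n : ℤ => (h (n - 1)) ^ 2) :=
    ((Equiv.subRight (1:ℤ)).summable_iff).mpr hhsum
  have hhtsum' : ∑' n : ℤ, (h (n - 1)) ^ 2 = ∑' n : ℤ, (h n) ^ 2 :=
    (Equiv.subRight (1:ℤ)).tsum_eq (fun n => (h n) ^ 2)
  -- RemR n = h n - h (n-1)
  have hRem : ∀ n : ℤ, RemR W ε t V n = h n - h (n - 1) := by
    intro n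
    simp only [RemR, hhdef, hWndef]
    push_cast
    ring
  have hRemsq : ∀ n : ℤ, (RemR W ε t V n) ^ 2 ≤ 2 * (h n) ^ 2 + 2 * (h (n - 1)) ^ 2 := by
    intro n
    rw [hRem n]
    nlinarith [sq_nonneg (h n + h (n - 1))]
  have hRemsum : Summable (fun n : ℤ => (RemR W ε t V n) ^ 2) :=
    Summable.of_nonneg_of_le (fun n => sq_nonneg _) hRemsq
      ((hhsum.mul_left 2).add (hhsum'.mul_left 2))
  have hRemtsum : ∑' n : ℤ, (RemR W ε t V n) ^ 2
      ≤ 8 * c0 ^ 2 * ε ^ 4 * S ^ 2 + 8 * Bq ^ 2 * ε ^ 8 * S := by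
    calc ∑' n : ℤ, (RemR W ε t V n) ^ 2
        ≤ ∑' n : ℤ, (2 * (h n) ^ 2 + 2 * (h (n - 1)) ^ 2) :=
          Summable.tsum_le_tsum hRemsq hRemsum ((hhsum.mul_left 2).add (hhsum'.mul_left 2))
      _ = 2 * (∑' n : ℤ, (h n) ^ 2) + 2 * (∑' n : ℤ, (h (n - 1)) ^ 2) := by
          rw [Summable.tsum_add (hhsum.mul_left 2) (hhsum'.mul_left 2), tsum_mul_left, tsum_mul_left]
      _ = 4 * (∑' n : ℤ, (h n) ^ 2) := by rw [hhtsum']; ring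
      _ ≤ 8 * c0 ^ 2 * ε ^ 4 * S ^ 2 + 8 * Bq ^ 2 * ε ^ 8 * S := by linarith [hhtsum]
  -- conclude
  have hl2V : l2norm V = Real.sqrt S := rfl
  have hsqrtS0 : (0:ℝ) ≤ Real.sqrt S := Real.sqrt_nonneg S
  have hfin : l2norm (RemR W ε t V) ≤ 3 * c0 * ε ^ 2 * S + 3 * Bq * ε ^ 4 * Real.sqrt S := by
    have h81 : (0:ℝ) ≤ 8 * c0 ^ 2 * ε ^ 4 * S ^ 2 := by positivity
    have h82 : (0:ℝ) ≤ 8 * Bq ^ 2 * ε ^ 8 * S := by positivity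
    calc l2norm (RemR W ε t V)
        ≤ Real.sqrt (8 * c0 ^ 2 * ε ^ 4 * S ^ 2 + 8 * Bq ^ 2 * ε ^ 8 * S) := by
          exact Real.sqrt_le_sqrt hRemtsum
      _ ≤ Real.sqrt (8 * c0 ^ 2 * ε ^ 4 * S ^ 2) + Real.sqrt (8 * Bq ^ 2 * ε ^ 8 * S) :=
          my_sqrt_add h81 h82
      _ ≤ 3 * c0 * ε ^ 2 * S + 3 * Bq * ε ^ 4 * Real.sqrt S := by
          have k1 : Real.sqrt (8 * c0 ^ 2 * ε ^ 4 * S ^ 2) ≤ 3 * c0 * ε ^ 2 * S := by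
            have : 8 * c0 ^ 2 * ε ^ 4 * S ^ 2 ≤ (3 * c0 * ε ^ 2 * S) ^ 2 := by nlinarith
            calc Real.sqrt (8 * c0 ^ 2 * ε ^ 4 * S ^ 2)
                ≤ Real.sqrt ((3 * c0 * ε ^ 2 * S) ^ 2) := Real.sqrt_le_sqrt this
              _ = 3 * c0 * ε ^ 2 * S := Real.sqrt_sq
                  (by nlinarith [mul_nonneg (mul_nonneg hc00 (sq_nonneg ε)) hS0])
          have k2 : Real.sqrt (8 * Bq ^ 2 * ε ^ 8 * S) ≤ 3 * Bq * ε ^ 4 * Real.sqrt S := by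
            have hss : Real.sqrt S ^ 2 = S := Real.sq_sqrt hS0
            have : 8 * Bq ^ 2 * ε ^ 8 * S ≤ (3 * Bq * ε ^ 4 * Real.sqrt S) ^ 2 := by
              nlinarith [sq_nonneg (Bq * ε ^ 4)]
            calc Real.sqrt (8 * Bq ^ 2 * ε ^ 8 * S)
                ≤ Real.sqrt ((3 * Bq * ε ^ 4 * Real.sqrt S) ^ 2) := Real.sqrt_le_sqrt this
              _ = 3 * Bq * ε ^ 4 * Real.sqrt S := Real.sqrt_sq
                  (by nlinarith [mul_nonneg (mul_nonneg hBq0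
                    (by positivity : (0:ℝ) ≤ ε ^ 4)) hsqrtS0])
          exact add_le_add k1 k2
  have hrpow0 : (0:ℝ) ≤ ε ^ ((9:ℝ)/2) := Real.rpow_nonneg hεpos.le _
  have hVnorm : (l2norm V) ^ 2 = S := Real.sq_sqrt hS0
  calc l2norm (RemR W ε t V)
      ≤ 3 * c0 * ε ^ 2 * S + 3 * Bq * ε ^ 4 * Real.sqrt S := hfin
    _ ≤ C * (ε ^ 2 * (l2norm V) ^ 2 + ε ^ 4 * l2norm V + ε ^ ((9:ℝ)/2)) := by
        rw [hVnorm, hl2V, hCdef]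
        have hε20 : (0:ℝ) ≤ ε ^ 2 := sq_nonneg ε
        have hε40 : (0:ℝ) ≤ ε ^ 4 := by positivity
        nlinarith [mul_nonneg (mul_nonneg hε20 hS0) hBq0,
          mul_nonneg (mul_nonneg hε40 hsqrtS0) hc00,
          mul_nonneg hε20 hS0, mul_nonneg hε40 hsqrtS0, hrpow0]
end
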